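/- From heat decay to the parabolic distance: Let d > 2 be a real number and N ≥ 0. There is a constant C = C(d,N) such that for all t ∈ (0,1] and all a ≥ 0, ∫_t^1 s^{−d/2} (1 + a/√s)^{−N−d} ds ≤ C (1+a)^{−N} (√t + a)^{−(d−2)}. -/

import Mathlib

open MeasureTheory

/-- **From heat decay to the parabolic distance**: for real `d > 2` and `N ≥ 0` there is a
constant `C = C(d,N)` such that for all `t ∈ (0,1]` and all `a ≥ 0`,
`∫_t^1 s^(-d/2) (1 + a/√s) ^(-N-d) ds ≤ C (1+a)^(-N) (√t + a)^(-(d-2))`. -/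
theorem heat_decay_to_parabolic_distance (d N : ℝ) (hd : 2 < d) (hN : 0 ≤ N) :
    ∃ C : ℝ, 0 < C ∧ ∀ t ∈ Set.Ioc (0 : ℝ) 1, ∀ a : ℝ, 0 ≤ a →
      (∫ s in t..1, s ^ (-d / 2) * (1 + a / Real.sqrt s) ^ (-N - d))
        ≤ C * (1 + a) ^ (-N) * (Real.sqrt t + a) ^ (-(d - 2)) := by
  have hd2 : (0:ℝ) < d - 2 := by linarith
  refine ⟨2 / (d - 2), div_pos two_pos hd2, ?_⟩
  rintro t ⟨ht0, ht1⟩ a ha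
  have h1a : (0:ℝ) < 1 + a := by linarith
  set f : ℝ → ℝ := fun s => s ^ (-d / 2) * (1 + a / Real.sqrt s) ^ (-N - d) with hf
  set φ : ℝ → ℝ := fun s => (Real.sqrt s + a) ^ (-(d-1)) * (Real.sqrt s)⁻¹ with hφ
  set g : ℝ → ℝ := fun s => (1 + a) ^ (-N) * φ s with hg
  set H : ℝ → ℝ := fun s => -(2/(d-2)) * (Real.sqrt s + a) ^ (-(d-2)) with hH
  -- pointwise bound
  have key : ∀ s ∈ Set.Icc t 1, f s ≤ g s := by
    intro s hsm
    have hs : 0 < s := lt_of_lt_of_le ht0 hsm.1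
    have hs1 : s ≤ 1 := hsm.2
    have hss : 0 < Real.sqrt s := Real.sqrt_pos.2 hs
    have hsa : 0 < Real.sqrt s + a := by linarith
    have e1 : (1 + a / Real.sqrt s) ^ (-N - d)
        = Real.sqrt s ^ (N + d) * (Real.sqrt s + a) ^ (-(N + d)) := by
      have h1 : 1 + a / Real.sqrt s = (Real.sqrt s + a) / Real.sqrt s := by
        field_simp
      rw [h1, Real.div_rpow hsa.le hss.le, show -N - d = -(N+d) by ring,
        Real.rpow_neg hss.le, div_eq_mul_inv, inv_inv]
      ring
    have hsd : s ^ (-d/2) * Real.sqrt s ^ d = 1 := by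
      rw [Real.sqrt_eq_rpow, ← Real.rpow_mul hs.le, ← Real.rpow_add hs,
        show -d/2 + 1/2*d = 0 by ring, Real.rpow_zero]
    have e2 : f s = Real.sqrt s ^ N * ((Real.sqrt s + a) ^ (-N) * (Real.sqrt s + a) ^ (-d)) := by
      rw [hf]
      simp only
      rw [e1, Real.rpow_add hss, show -(N+d) = -N + -d by ring, Real.rpow_add hsa]
      calc s ^ (-d / 2) * (Real.sqrt s ^ N * Real.sqrt s ^ d *
              ((Real.sqrt s + a) ^ (-N) * (Real.sqrt s + a) ^ (-d)))
          = (s ^ (-d/2) * Real.sqrt s ^ d) * (Real.sqrt s ^ N *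
              ((Real.sqrt s + a) ^ (-N) * (Real.sqrt s + a) ^ (-d))) := by ring
        _ = _ := by rw [hsd, one_mul]
    have e3 : Real.sqrt s ^ N * (Real.sqrt s + a) ^ (-N) ≤ (1 + a) ^ (-N) := by
      have hb : Real.sqrt s / (Real.sqrt s + a) ≤ 1 / (1 + a) := by
        rw [div_le_div_iff₀ hsa h1a]
        nlinarith [Real.sqrt_le_one.2 hs1, Real.sqrt_nonneg s]
      calc Real.sqrt s ^ N * (Real.sqrt s + a) ^ (-N)
          = (Real.sqrt s / (Real.sqrt s + a)) ^ N := by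
            rw [Real.div_rpow hss.le hsa.le, Real.rpow_neg hsa.le, div_eq_mul_inv]
        _ ≤ (1 / (1 + a)) ^ N := Real.rpow_le_rpow (by positivity) hb hN
        _ = (1 + a) ^ (-N) := by
            rw [one_div, Real.inv_rpow h1a.le, ← Real.rpow_neg h1a.le]
    have e4 : (Real.sqrt s + a) ^ (-d)
        = (Real.sqrt s + a) ^ (-(d-1)) * (Real.sqrt s + a) ^ (-(1:ℝ)) := by
      rw [← Real.rpow_add hsa, show -(d-1) + -(1:ℝ) = -d by ring]
    have e5 : (Real.sqrt s + a) ^ (-(1:ℝ)) ≤ (Real.sqrt s)⁻¹ := by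
      rw [Real.rpow_neg_one]
      exact inv_anti₀ hss (by linarith)
    calc f s = (Real.sqrt s ^ N * (Real.sqrt s + a) ^ (-N)) *
          ((Real.sqrt s + a) ^ (-(d-1)) * (Real.sqrt s + a) ^ (-(1:ℝ))) := by
          rw [e2, e4]; ring
      _ ≤ (1 + a) ^ (-N) * ((Real.sqrt s + a) ^ (-(d-1)) * (Real.sqrt s)⁻¹) :=
          mul_le_mul e3 (mul_le_mul_of_nonneg_left e5 (by positivity)) (by positivity)
            (by positivity)
      _ = g s := rfl
  -- continuity
  have hposIcc : ∀ s ∈ Set.Icc t 1, 0 < s := fun s hsm => lt_of_lt_of_le ht0 hsm.1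
  have hcont_f : ContinuousOn f (Set.Icc t 1) := by
    apply ContinuousOn.mul
    · exact fun s hsm => (Real.continuousAt_rpow_const s _
        (Or.inl (hposIcc s hsm).ne')).continuousWithinAt
    · apply ContinuousOn.rpow_const
      · exact (continuousOn_const.add (continuousOn_const.div
          Real.continuous_sqrt.continuousOn
          (fun s hsm => (Real.sqrt_pos.2 (hposIcc s hsm)).ne')))
      · intro s hsm
        have hss : 0 < Real.sqrt s := Real.sqrt_pos.2 (hposIcc s hsm)
        left
        positivity
  have hcont_φ : ContinuousOn φ (Set.Icc t 1) := by
    apply ContinuousOn.mul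
    · apply ContinuousOn.rpow_const
      · exact Real.continuous_sqrt.continuousOn.add continuousOn_const
      · intro s hsm
        have hss : 0 < Real.sqrt s := Real.sqrt_pos.2 (hposIcc s hsm)
        left
        positivity
    · exact ContinuousOn.inv₀ Real.continuous_sqrt.continuousOn
        (fun s hsm => (Real.sqrt_pos.2 (hposIcc s hsm)).ne')
  have hcont_g : ContinuousOn g (Set.Icc t 1) := continuousOn_const.mul hcont_φ
  have huIcc : Set.uIcc t 1 = Set.Icc t 1 := Set.uIcc_of_le ht1
  have hint_f : IntervalIntegrable f volume t 1 := by
    apply ContinuousOn.intervalIntegrable; rwa [huIcc]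
  have hint_φ : IntervalIntegrable φ volume t 1 := by
    apply ContinuousOn.intervalIntegrable; rwa [huIcc]
  have hint_g : IntervalIntegrable g volume t 1 := by
    apply ContinuousOn.intervalIntegrable; rwa [huIcc]
  have hmono : (∫ s in t..1, f s) ≤ ∫ s in t..1, g s :=
    intervalIntegral.integral_mono_on ht1 hint_f hint_g key
  -- FTC
  have hftc : (∫ s in t..1, φ s) = H 1 - H t := by
    apply intervalIntegral.integral_eq_sub_of_hasDerivAt
    · intro s hsm
      rw [huIcc] at hsm
      have hs : 0 < s := hposIcc s hsm
      have hss : 0 < Real.sqrt s := Real.sqrt_pos.2 hs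
      have hsa : 0 < Real.sqrt s + a := by linarith
      have h1 : HasDerivAt (fun x => Real.sqrt x + a) (1 / (2 * Real.sqrt s)) s :=
        (Real.hasDerivAt_sqrt hs.ne').add_const a
      have h2 : HasDerivAt (fun y : ℝ => y ^ (-(d-2)))
          (-(d-2) * (Real.sqrt s + a) ^ (-(d-2) - 1)) (Real.sqrt s + a) :=
        Real.hasDerivAt_rpow_const (Or.inl hsa.ne')
      have h3 := (h2.comp s h1).const_mul (-(2/(d-2)))
      have haux : ∀ c u : ℝ, u ≠ 0 →
          -(2/(d-2)) * (-(d-2) * c * (1/(2*u))) = c * u⁻¹ := by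
        intro c u hu
        field_simp
      refine h3.congr_deriv ?_
      rw [show -(d-2) - 1 = -(d-1) by ring, haux _ _ hss.ne']
    · exact hint_φ
  have hHle : H 1 - H t ≤ 2/(d-2) * (Real.sqrt t + a) ^ (-(d-2)) := by
    have h1 : H 1 = -(2/(d-2)) * (1 + a) ^ (-(d-2)) := by rw [hH]; simp [Real.sqrt_one]
    have h2 : H t = -(2/(d-2)) * (Real.sqrt t + a) ^ (-(d-2)) := rfl
    rw [h1, h2]
    have hpos1 : 0 < (1 + a) ^ (-(d-2)) := Real.rpow_pos_of_pos h1a _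
    have hc : 0 < 2/(d-2) := div_pos two_pos hd2
    nlinarith
  have hgval : (∫ s in t..1, g s) = (1 + a) ^ (-N) * (H 1 - H t) := by
    rw [hg]
    simp only
    rw [intervalIntegral.integral_const_mul, hftc]
  calc (∫ s in t..1, f s) ≤ ∫ s in t..1, g s := hmono
    _ = (1 + a) ^ (-N) * (H 1 - H t) := hgval
    _ ≤ (1 + a) ^ (-N) * (2/(d-2) * (Real.sqrt t + a) ^ (-(d-2))) :=
        mul_le_mul_of_nonneg_left hHle (by positivity)
    _ = 2/(d-2) * (1 + a) ^ (-N) * (Real.sqrt t + a) ^ (-(d-2)) := by ring
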